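/- Let c₁ > 0 and b₀ > 0, set T = 2c₁/b₀, and let g : ℝ → ℝ be twice continuously differentiable on [−T, T] with |g(0)| ≤ c₁, |g'(0)| ≥ b₀, and |g''(s)| ≤ b₀²/(2c₁) for all s ∈ [−T, T]. Then there exists t ∈ [−T, T] with g(t) = 0. -/

import Mathlib

open Set intervalIntegral

private lemma helper_zero (c₁ b₀ : ℝ) (hc₁ : 0 < c₁) (hb₀ : 0 < b₀) (T : ℝ)
    (hT : T = 2 * c₁ / b₀)
    (g : ℝ → ℝ) (hg : ContDiffOn ℝ 2 g (Set.Icc (-T) T))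
    (h0 : |g 0| ≤ c₁)
    (h1 : b₀ ≤ derivWithin g (Set.Icc (-T) T) 0)
    (h2 : ∀ s ∈ Set.Icc (-T) T,
      |iteratedDerivWithin 2 g (Set.Icc (-T) T) s| ≤ b₀ ^ 2 / (2 * c₁)) :
    ∃ t ∈ Set.Icc (-T) T, g t = 0 := by
  have hT0 : 0 < T := by rw [hT]; positivity
  set s : Set ℝ := Set.Icc (-T) T with hs_def
  have hsub : (-T : ℝ) ≤ T := by linarith
  have hus : UniqueDiffOn ℝ s := uniqueDiffOn_Icc (by linarith)
  have h0s : (0 : ℝ) ∈ s := ⟨by linarith, hT0.le⟩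
  have hTs : T ∈ s := ⟨by linarith, le_refl T⟩
  have hmTs : (-T : ℝ) ∈ s := ⟨le_refl _, by linarith⟩
  set M : ℝ := b₀ ^ 2 / (2 * c₁) with hM_def
  set f1 : ℝ → ℝ := iteratedDerivWithin 1 g s with hf1_def
  have hf1diff : DifferentiableOn ℝ f1 s :=
    hg.differentiableOn_iteratedDerivWithin (by norm_num) hus
  have hf1d : ∀ x ∈ s, HasDerivWithinAt f1 (iteratedDerivWithin 2 g s x) s x := by
    intro x hx
    have := (hf1diff x hx).hasDerivWithinAt
    rwa [show iteratedDerivWithin 2 g s x = derivWithin f1 s x from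
      congrFun iteratedDerivWithin_succ x]
  have hf10 : b₀ ≤ f1 0 := by
    rwa [hf1_def, iteratedDerivWithin_one]
  -- Lipschitz bound on f1
  have hlip : ∀ x ∈ s, b₀ - M * |x| ≤ f1 x := by
    intro x hx
    have hconv : Convex ℝ s := convex_Icc _ _
    have := hconv.norm_image_sub_le_of_norm_hasDerivWithin_le hf1d
      (fun y hy => (h2 y hy)) h0s hx
    rw [sub_zero] at this
    have h1' : |f1 x - f1 0| ≤ M * |x| := this
    have := abs_le.mp h1'
    linarith [this.1]
  -- FTC on [0, T] and [-T, 0]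
  have hderivg : ∀ x ∈ Set.Ioo (-T) T, HasDerivAt g (f1 x) x := by
    intro x hx
    have hxs : x ∈ s := Set.mem_Icc_of_Ioo hx
    have hdw : HasDerivWithinAt g (derivWithin g s x) s x :=
      ((hg.differentiableOn (by norm_num)) x hxs).hasDerivWithinAt
    have hnh : s ∈ nhds x := Icc_mem_nhds hx.1 hx.2
    have := hdw.hasDerivAt hnh
    rwa [show f1 x = derivWithin g s x from congrFun iteratedDerivWithin_one x]
  have hf1cont : ContinuousOn f1 s := hf1diff.continuousOn
  have hgcont : ContinuousOn g s := hg.continuousOn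
  have hint1 : IntervalIntegrable f1 MeasureTheory.volume 0 T :=
    (hf1cont.mono (by rw [Set.uIcc_of_le hT0.le]; exact Set.Icc_subset_Icc (by linarith) le_rfl)).intervalIntegrable
  have hint2 : IntervalIntegrable f1 MeasureTheory.volume (-T) 0 :=
    (hf1cont.mono (by rw [Set.uIcc_of_le (by linarith : (-T:ℝ) ≤ 0)]; exact Set.Icc_subset_Icc le_rfl hT0.le)).intervalIntegrable
  have hftc1 : ∫ x in (0:ℝ)..T, f1 x = g T - g 0 := by
    apply intervalIntegral.integral_eq_sub_of_hasDerivAt_of_le hT0.le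
      (hgcont.mono (Set.Icc_subset_Icc (by linarith) le_rfl))
      (fun x hx => hderivg x ⟨by linarith [hx.1], hx.2⟩) hint1
  have hftc2 : ∫ x in (-T:ℝ)..0, f1 x = g 0 - g (-T) := by
    apply intervalIntegral.integral_eq_sub_of_hasDerivAt_of_le (by linarith)
      (hgcont.mono (Set.Icc_subset_Icc le_rfl hT0.le))
      (fun x hx => hderivg x ⟨hx.1, by linarith [hx.2]⟩) hint2
  have hMT : M * T = b₀ := by
    rw [hM_def, hT]; field_simp
  have hbT : b₀ * T = 2 * c₁ := by
    rw [hT]; field_simp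
  -- lower bound of integrals
  have hlow1 : c₁ ≤ ∫ x in (0:ℝ)..T, f1 x := by
    have hmono : (∫ x in (0:ℝ)..T, (b₀ - M * x)) ≤ ∫ x in (0:ℝ)..T, f1 x := by
      apply intervalIntegral.integral_mono_on hT0.le _ hint1
      · intro x hx
        have hxs : x ∈ s := ⟨by linarith [hx.1], hx.2⟩
        have := hlip x hxs
        rw [abs_of_nonneg hx.1] at this
        linarith
      · exact (continuous_const.sub (continuous_const.mul continuous_id')).intervalIntegrable _ _
    have hcalc : (∫ x in (0:ℝ)..T, (b₀ - M * x)) = b₀ * T - M * (T ^ 2 / 2) := by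
      rw [intervalIntegral.integral_sub (f := fun _ => b₀) (g := fun x => M * x) (continuous_const.intervalIntegrable _ _)
        ((continuous_const.mul continuous_id').intervalIntegrable _ _)]
      simp [intervalIntegral.integral_const_mul, integral_id, mul_comm]
    rw [hcalc] at hmono
    have : b₀ * T - M * (T ^ 2 / 2) = c₁ := by
      have : M * (T ^ 2 / 2) = (M * T) * T / 2 := by ring
      rw [this, hMT] at *
      nlinarith [hbT]
    linarith
  have hlow2 : c₁ ≤ ∫ x in (-T:ℝ)..0, f1 x := by
    have hmono : (∫ x in (-T:ℝ)..0, (b₀ + M * x)) ≤ ∫ x in (-T:ℝ)..0, f1 x := by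
      apply intervalIntegral.integral_mono_on (by linarith) _ hint2
      · intro x hx
        have hxs : x ∈ s := ⟨hx.1, by linarith [hx.2]⟩
        have := hlip x hxs
        rw [abs_of_nonpos hx.2] at this
        linarith
      · exact (continuous_const.add (continuous_const.mul continuous_id')).intervalIntegrable _ _
    have hcalc : (∫ x in (-T:ℝ)..0, (b₀ + M * x)) = b₀ * T - M * (T ^ 2 / 2) := by
      rw [intervalIntegral.integral_add (f := fun _ => b₀) (g := fun x => M * x) (continuous_const.intervalIntegrable _ _)
        ((continuous_const.mul continuous_id').intervalIntegrable _ _)]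
      simp [intervalIntegral.integral_const_mul, integral_id, mul_comm]
      ring
    rw [hcalc] at hmono
    have : b₀ * T - M * (T ^ 2 / 2) = c₁ := by
      have : M * (T ^ 2 / 2) = (M * T) * T / 2 := by ring
      rw [this, hMT] at *
      nlinarith [hbT]
    linarith
  -- endpoints
  have habs := abs_le.mp h0
  have hgT : 0 ≤ g T := by rw [hftc1] at hlow1; linarith [habs.1]
  have hgmT : g (-T) ≤ 0 := by rw [hftc2] at hlow2; linarith [habs.2]
  -- IVT
  have := intermediate_value_Icc hsub hgcont
  have h0mem : (0:ℝ) ∈ Set.Icc (g (-T)) (g T) := ⟨hgmT, hgT⟩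
  obtain ⟨t, hts, hgt⟩ := this h0mem
  exact ⟨t, hts, hgt⟩

/-- Let `T = 2c₁/b₀` with `c₁, b₀ > 0`, and let `g` be twice
continuously differentiable on `[−T, T]` with `|g(0)| ≤ c₁`, `|g'(0)| ≥ b₀`
and `|g''(s)| ≤ b₀²/(2c₁)` on `[−T, T]`. Then `g` has a zero in `[−T, T]`. -/
theorem zero_of_directional_derivative
    (c₁ b₀ : ℝ) (hc₁ : 0 < c₁) (hb₀ : 0 < b₀) (T : ℝ) (hT : T = 2 * c₁ / b₀)
    (g : ℝ → ℝ) (hg : ContDiffOn ℝ 2 g (Set.Icc (-T) T))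
    (h0 : |g 0| ≤ c₁)
    (h1 : b₀ ≤ |derivWithin g (Set.Icc (-T) T) 0|)
    (h2 : ∀ s ∈ Set.Icc (-T) T,
      |iteratedDerivWithin 2 g (Set.Icc (-T) T) s| ≤ b₀ ^ 2 / (2 * c₁)) :
    ∃ t ∈ Set.Icc (-T) T, g t = 0 := by
  have hT0 : 0 < T := by rw [hT]; positivity
  have hus : UniqueDiffOn ℝ (Set.Icc (-T) T) := uniqueDiffOn_Icc (by linarith)
  have h0s : (0 : ℝ) ∈ Set.Icc (-T) T := ⟨by linarith, hT0.le⟩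
  rcases le_or_gt b₀ (derivWithin g (Set.Icc (-T) T) 0) with hpos | hneg
  · exact helper_zero c₁ b₀ hc₁ hb₀ T hT g hg h0 hpos h2
  · have hneg' : derivWithin g (Set.Icc (-T) T) 0 ≤ -b₀ := by
      rcases abs_cases (derivWithin g (Set.Icc (-T) T) 0) with ⟨he, _⟩ | ⟨he, _⟩
      · rw [he] at h1; linarith
      · rw [he] at h1; linarith
    have hd : b₀ ≤ derivWithin (-g) (Set.Icc (-T) T) 0 := by
      rw [show derivWithin (-g) (Set.Icc (-T) T) 0
          = -derivWithin g (Set.Icc (-T) T) 0 from derivWithin.neg]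
      linarith
    have h2' : ∀ x ∈ Set.Icc (-T) T,
        |iteratedDerivWithin 2 (-g) (Set.Icc (-T) T) x| ≤ b₀ ^ 2 / (2 * c₁) := by
      intro x hx
      rw [iteratedDerivWithin_neg, abs_neg]
      exact h2 x hx
    have h0' : |(-g) 0| ≤ c₁ := by simpa using h0
    obtain ⟨t, hts, hgt⟩ := helper_zero c₁ b₀ hc₁ hb₀ T hT (-g) hg.neg h0' hd h2'
    exact ⟨t, hts, by simpa using hgt⟩
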